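/- Let G be a connected finite simple graph. If α(G) ≤ κ(G) + 1, then G has a Hamiltonian path. -/

import Mathlib

open SimpleGraph Set

variable {V : Type*}

/-- The independence number of `S` in `G`: the maximum cardinality of a subset of `S`
that is independent in `G`. -/
noncomputable def indepNumOn (G : SimpleGraph V) (S : Set V) : ℕ :=
  sSup {n | ∃ I : Set V, I ⊆ S ∧ I.Pairwise (fun a b => ¬ G.Adj a b) ∧ I.ncard = n}

/-- `I` is a maximum independent subset of `S` in `G`. -/
def MaxIndepOn (G : SimpleGraph V) (S : Set V) (I : Set V) : Prop :=
  I ⊆ S ∧ I.Pairwise (fun a b => ¬ G.Adj a b) ∧ I.ncard = indepNumOn G S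

/-- Two `x`–`y` walks are internally disjoint if they share only `x` and `y`. -/
def InternallyDisjoint (G : SimpleGraph V) {x y : V} (p q : G.Walk x y) : Prop :=
  ∀ v, v ∈ p.support → v ∈ q.support → v = x ∨ v = y

/-- Local connectivity `κ_G(x,y)`: maximum number of pairwise internally disjoint
`x`–`y` paths in `G`. -/
noncomputable def localConn (G : SimpleGraph V) (x y : V) : ℕ :=
  sSup {n | ∃ P : Set (G.Path x y),
    P.Pairwise (fun p q => InternallyDisjoint G p.1 q.1) ∧ P.ncard = n}

/-- `κ_G(S)`: the minimum of local connectivities over distinct pairs in `S`,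
`+∞` if `S` has at most one element. -/
noncomputable def setConn (G : SimpleGraph V) (S : Set V) : ℕ∞ :=
  ⨅ x ∈ S, ⨅ y ∈ S, ⨅ _ : x ≠ y, (localConn G x y : ℕ∞)

/-- Vertex connectivity `κ(G)`: the maximum `k` such that `G` has more than `k`
vertices and removing fewer than `k` vertices always leaves a connected graph. -/
noncomputable def vertexConn (G : SimpleGraph V) [Fintype V] : ℕ :=
  sSup {k | k < Fintype.card V ∧ ∀ X : Finset V, X.card < k →
    (G.induce ((↑X : Set V)ᶜ)).Connected}

/-- The set of leaves (vertices of degree one) of a subgraph. -/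
def subLeaves {G : SimpleGraph V} (T : G.Subgraph) : Set V :=
  {v | v ∈ T.verts ∧ (T.neighborSet v).ncard = 1}

/-- The set of branch vertices (vertices of degree at least three) of a subgraph. -/
def subBranches {G : SimpleGraph V} (T : G.Subgraph) : Set V :=
  {v | v ∈ T.verts ∧ 3 ≤ (T.neighborSet v).ncard}


section CEaux
open List

/-- A nonempty list of distinct vertices forming a path in `G`. -/
def IsPathList (G : SimpleGraph V) (l : List V) : Prop :=
  l ≠ [] ∧ l.Nodup ∧ l.Chain' G.Adj

lemma ipl_reverse {G : SimpleGraph V} {l : List V} (h : IsPathList G l) :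
    IsPathList G l.reverse := by
  obtain ⟨h1, h2, h3⟩ := h
  refine ⟨by simpa using h1, by simpa using h2, ?_⟩
  unfold List.Chain'
  rw [List.isChain_reverse]
  have : (fun a b => G.Adj b a) = G.Adj := by
    funext a b; simp [flip, SimpleGraph.adj_comm]
  rwa [this]

lemma walk_support_head? {G : SimpleGraph V} {u v : V} (p : G.Walk u v) :
    p.support.head? = some u := by
  rw [p.support_eq_cons]; rfl

lemma walk_support_getLast? {G : SimpleGraph V} {u v : V} (p : G.Walk u v) :
    p.support.getLast? = some v := by
  rw [List.getLast?_eq_getLast p.support_ne_nil, p.getLast_support]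

lemma exists_walk_of_list {G : SimpleGraph V} :
    ∀ (l : List V), l ≠ [] → l.Chain' G.Adj →
      ∃ (x y : V) (p : G.Walk x y), p.support = l := by
  intro l
  induction l with
  | nil => simp
  | cons a t ih =>
    intro _ hc
    cases t with
    | nil => exact ⟨a, a, Walk.nil, rfl⟩
    | cons b t' =>
      obtain ⟨x, y, p, hp⟩ := ih (by simp) hc.tail
      have hx : x = b := by
        have h1 := walk_support_head? p
        rw [hp] at h1
        simpa using h1.symm
      subst hx
      unfold List.Chain' at hc
      rw [List.isChain_cons_cons] at hc
      exact ⟨a, y, Walk.cons hc.1 p, by simp [hp]⟩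

/-- The splice lemma: glue a path `r` of the graph between two vertex lists. -/
lemma splice {G : SimpleGraph V} (A B : List V) {x y : V} (r : G.Walk x y)
    (hA : A.Nodup) (hB : B.Nodup) (hcA : A.Chain' G.Adj) (hcB : B.Chain' G.Adj)
    (hr : r.IsPath)
    (hdisA : ∀ z ∈ r.support, z ∉ A) (hdisB : ∀ z ∈ r.support, z ∉ B)
    (hAB : A.Disjoint B)
    (hjA : ∀ a, A.getLast? = some a → G.Adj a x)
    (hjB : ∀ b, B.head? = some b → G.Adj y b) :
    IsPathList G (A ++ r.support ++ B) ∧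
      (A ++ r.support ++ B).length = A.length + B.length + r.support.length := by
  constructor
  · refine ⟨?_, ?_, ?_⟩
    · simp [r.support_ne_nil]
    · rw [List.append_assoc]
      refine (hA.append ((hr.support_nodup).append hB ?_) ?_)
      · intro z hz hz'; exact hdisB z hz hz'
      · intro z hz hz'
        rcases List.mem_append.mp hz' with h | h
        · exact hdisA z h hz
        · exact hAB hz h
    · unfold List.Chain'
      rw [List.append_assoc, List.isChain_append]
      refine ⟨hcA, ?_, ?_⟩
      · rw [List.isChain_append]
        refine ⟨r.isChain_adj_support, hcB, ?_⟩
        intro a ha b hb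
        rw [walk_support_getLast? r] at ha
        cases ha
        exact hjB b hb
      · intro a ha b hb
        rw [List.head?_append, walk_support_head? r] at hb
        rw [show (some x).or B.head? = some x from rfl] at hb
        cases hb
        exact hjA a ha
  · simp [List.length_append]; omega

lemma ce_extend [Fintype V] [DecidableEq V] {G : SimpleGraph V}
    (hκα : indepNumOn G Set.univ ≤ vertexConn G + 1)
    (hcardκ : ∀ X : Finset V, X.card < vertexConn G → (G.induce ((↑X : Set V)ᶜ)).Connected)
    (L : List V) (hL : IsPathList G L) (w : V) (hw : w ∉ L) :
    ∃ L', IsPathList G L' ∧ L.length < L'.length := by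
  classical
  by_contra hno
  push_neg at hno
  obtain ⟨hne, hnd, hch⟩ := hL
  set m := L.length with hm
  have hm0 : 0 < m := List.length_pos_iff.mpr hne
  have hflip : (fun a b => G.Adj b a) = G.Adj := by
    funext a b; simp [flip, SimpleGraph.adj_comm]
  -- the component of w off the path
  set H : Set V := {x : V | ∃ q : G.Walk w x, ∀ y ∈ q.support, y ∉ L} with hH
  have hwH : w ∈ H := ⟨Walk.nil, by simp [hw]⟩
  have hHL : ∀ x ∈ H, x ∉ L := by
    rintro x ⟨q, hq⟩
    exact hq x q.end_mem_support
  have hHadj : ∀ x ∈ H, ∀ z, G.Adj x z → z ∉ L → z ∈ H := by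
    rintro x ⟨q, hq⟩ z hadj hz
    refine ⟨q.concat hadj, ?_⟩
    intro y hy
    rw [Walk.support_concat] at hy
    rcases List.mem_append.mp hy with h | h
    · exact hq y h
    · simp at h; subst h; exact hz
  have hHpath : ∀ x ∈ H, ∀ y ∈ H,
      ∃ r : G.Walk x y, r.IsPath ∧ ∀ z ∈ r.support, z ∉ L := by
    rintro x ⟨q1, hq1⟩ y ⟨q2, hq2⟩
    refine ⟨(q1.reverse.append q2).bypass, Walk.bypass_isPath _, ?_⟩
    intro z hz
    have hz' := (q1.reverse.append q2).support_bypass_subset hz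
    rw [Walk.support_append] at hz'
    rcases List.mem_append.mp hz' with h | h
    · rw [Walk.support_reverse, List.mem_reverse] at h
      exact hq1 z h
    · exact hq2 z (List.mem_of_mem_tail h)
  -- the contact set
  set N : Finset V := L.toFinset.filter (fun t => ∃ x ∈ H, G.Adj x t) with hN
  have hNmem : ∀ t, t ∈ N ↔ (t ∈ L ∧ ∃ x ∈ H, G.Adj x t) := by
    intro t; simp [hN]
  -- extension from an endpoint contact
  have hext : ∀ (C : List V) (c : V), C.Nodup → C.Chain' G.Adj → (∀ z ∈ C, z ∈ L) →
      C.length = m → C.head? = some c → (∃ x ∈ H, G.Adj x c) → False := by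
    rintro C c hCnd hCch hCL hClen hChd ⟨x, hx, hadj⟩
    obtain ⟨r, hr, hrL⟩ := hHpath w hwH x hx
    have := splice [] C r (by simp) hCnd List.isChain_nil hCch hr
      (by simp) (fun z hz hz' => hrL z hz (hCL z hz'))
      (by simp [List.Disjoint])
      (by simp)
      (by intro b hb; rw [hChd] at hb; cases hb; exact hadj)
    have hlen := hno _ this.1
    rw [this.2] at hlen
    have := r.length_support
    simp at hlen
    omega
  -- endpoints are not contacts
  have huN : L.head hne ∉ N := by
    intro h
    rw [hNmem] at h
    exact hext L (L.head hne) hnd hch (fun z hz => hz) rfl (List.head?_eq_head hne) h.2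
  have hvN : L.getLast hne ∉ N := by
    intro h
    rw [hNmem] at h
    obtain ⟨h1, h2, h3⟩ := ipl_reverse ⟨hne, hnd, hch⟩
    refine hext L.reverse (L.getLast hne) h2 h3 (fun z hz => List.mem_reverse.mp hz)
      (by simp [hm]) ?_ h.2
    rw [List.head?_reverse, List.getLast?_eq_getLast hne]
  -- index facts
  have hidx : ∀ t ∈ N, L.idxOf t < m ∧ 0 < L.idxOf t ∧ L.idxOf t + 1 < m := by
    intro t ht
    rw [hNmem] at ht
    have h1 : L.idxOf t < m := List.idxOf_lt_length_iff.mpr ht.1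
    have hget : L[L.idxOf t] = t := List.getElem_idxOf h1
    have h2 : L.idxOf t ≠ 0 := by
      intro h0
      apply huN
      rw [hNmem]
      simp only [h0] at hget
      refine ⟨List.head_mem hne, ?_⟩
      rw [List.head_eq_getElem, hget]
      exact ht.2
    have h3 : L.idxOf t ≠ m - 1 := by
      intro h0
      apply hvN
      rw [hNmem]
      simp only [h0] at hget
      refine ⟨List.getLast_mem hne, ?_⟩
      rw [List.getLast_eq_getElem]
      rw [show L[L.length - 1] = t from hget]
      exact ht.2
    exact ⟨h1, by omega, by omega⟩
  set succ : V → V := fun t => L.getD (L.idxOf t + 1) w with hsuccdef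
  have hsucc : ∀ t ∈ N, ∀ (h : L.idxOf t + 1 < m), succ t = L[L.idxOf t + 1] := by
    intro t ht h
    exact List.getD_eq_getElem L w h
  have hpair : ∀ t1 ∈ N, ∀ t2 ∈ N, ∃ (x1 x2 : V) (r : G.Walk x1 x2), r.IsPath ∧
      (∀ z ∈ r.support, z ∉ L) ∧ G.Adj x1 t1 ∧ G.Adj x2 t2 := by
    intro t1 ht1 t2 ht2
    rw [hNmem] at ht1 ht2
    obtain ⟨x1, hx1, hadj1⟩ := ht1.2
    obtain ⟨x2, hx2, hadj2⟩ := ht2.2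
    obtain ⟨r, hr, hrL⟩ := hHpath x1 hx1 x2 hx2
    exact ⟨x1, x2, r, hr, hrL, hadj1, hadj2⟩
  -- chains of take and drop
  have hchsplit : ∀ k : ℕ, (L.take k).Chain' G.Adj ∧ (L.drop k).Chain' G.Adj := by
    intro k
    have : ((L.take k) ++ (L.drop k)).Chain' G.Adj := by
      rw [List.take_append_drop]; exact hch
    have h := List.isChain_append.mp this
    exact ⟨h.1, h.2.1⟩
  have hlastTake : ∀ i : ℕ, ∀ h : i < m, (L.take (i+1)).getLast? = some L[i] := by
    intro i h
    rw [List.getLast?_take]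
    simp [List.getElem?_eq_getElem h]
  have hheadDrop : ∀ i : ℕ, ∀ h : i < m, (L.drop i).head? = some L[i] := by
    intro i h
    rw [List.head?_drop]
    exact List.getElem?_eq_getElem h
  -- generic splice-in-the-middle contradiction:
  -- if t1 t2 ∈ N and pieces A, B with A ++ B a rearrangement of L with
  -- last A adjacent-needed t1 etc. Handled per-case below.
  -- (d) successors are not contacts
  have hsuccN : ∀ t ∈ N, succ t ∉ N := by
    intro t ht hbad
    obtain ⟨h1, h2, h3⟩ := hidx t ht
    obtain ⟨x1, x2, r, hr, hrL, hadj1, hadj2⟩ := hpair t ht (succ t) hbad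
    have hb := hsucc t ht h3
    have hAB : (L.take (L.idxOf t + 1)).Disjoint (L.drop (L.idxOf t + 1)) :=
      List.disjoint_take_drop hnd le_rfl
    have := splice (L.take (L.idxOf t + 1)) (L.drop (L.idxOf t + 1)) r
      ((List.take_sublist _ _).nodup hnd) ((List.drop_sublist _ _).nodup hnd)
      (hchsplit _).1 (hchsplit _).2 hr
      (fun z hz hz' => hrL z hz (List.take_subset _ _ hz'))
      (fun z hz hz' => hrL z hz (List.drop_subset _ _ hz'))
      hAB
      (by
        intro a ha
        rw [hlastTake _ h1] at ha
        cases ha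
        rw [show L[L.idxOf t] = t from List.getElem_idxOf h1]
        exact hadj1.symm)
      (by
        intro b hb'
        rw [hheadDrop _ h3] at hb'
        cases hb'
        rw [← hb]
        exact hadj2)
    have hlen := hno _ this.1
    rw [this.2] at hlen
    have h4 := r.length_support
    rw [List.length_take, List.length_drop] at hlen
    omega
  -- (e) the head is not adjacent to a successor
  have husucc : ∀ t ∈ N, ¬ G.Adj (L.head hne) (succ t) := by
    intro t ht hadj
    obtain ⟨h1, h2, h3⟩ := hidx t ht
    have hb := hsucc t ht h3
    set i := L.idxOf t with hi
    -- rotated list C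
    set C : List V := (L.take (i+1)).reverse ++ L.drop (i+1) with hC
    have hCnd : C.Nodup := by
      refine List.Nodup.append (by simpa using (List.take_sublist _ _).nodup hnd)
        ((List.drop_sublist _ _).nodup hnd) ?_
      rw [List.disjoint_reverse_left]
      exact List.disjoint_take_drop hnd le_rfl
    have hCch : C.Chain' G.Adj := by
      unfold List.Chain'
      rw [List.isChain_append]
      refine ⟨?_, (hchsplit _).2, ?_⟩
      · rw [List.isChain_reverse, hflip]
        exact (hchsplit _).1
      · intro a ha b hb'
        rw [List.getLast?_reverse] at ha
        have hhead : (L.take (i+1)).head? = some (L.head hne) := by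
          rw [List.head?_eq_getElem?]
          rw [List.getElem?_take, if_pos (show 0 < i+1 by omega)]
          rw [← List.head?_eq_getElem?]
          exact List.head?_eq_head hne
        rw [hhead] at ha
        cases ha
        rw [hheadDrop _ h3] at hb'
        cases hb'
        rw [← hb]
        exact hadj
    have hCL : ∀ z ∈ C, z ∈ L := by
      intro z hz
      rcases List.mem_append.mp hz with h | h
      · exact List.take_subset _ _ (List.mem_reverse.mp h)
      · exact List.drop_subset _ _ h
    have hClen : C.length = m := by
      rw [List.length_append, List.length_reverse, List.length_take, List.length_drop]
      omega
    have hChd : C.head? = some t := by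
      rw [List.head?_append, List.head?_reverse, hlastTake _ h1]
      rw [show L[i] = t from List.getElem_idxOf h1]
      rfl
    rw [hNmem] at ht
    exact hext C t hCnd hCch hCL hClen hChd ht.2
  -- (f) successors are pairwise non-adjacent
  have hchsplit2 : ∀ (l : List V), l.Chain' G.Adj → ∀ k : ℕ,
      (l.take k).Chain' G.Adj ∧ (l.drop k).Chain' G.Adj := by
    intro l hl k
    have : ((l.take k) ++ (l.drop k)).Chain' G.Adj := by
      rw [List.take_append_drop]; exact hl
    have h := List.isChain_append.mp this
    exact ⟨h.1, h.2.1⟩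
  have hcross' : ∀ t1 ∈ N, ∀ t2 ∈ N, L.idxOf t1 < L.idxOf t2 →
      ¬ G.Adj (succ t1) (succ t2) := by
    intro t1 ht1 t2 ht2 hij hadj
    obtain ⟨hi1, hi2, hi3⟩ := hidx t1 ht1
    obtain ⟨hj1, hj2, hj3⟩ := hidx t2 ht2
    set i := L.idxOf t1 with hidef
    set j := L.idxOf t2 with hjdef
    have hb1 := hsucc t1 ht1 hi3
    have hb2 := hsucc t2 ht2 hj3
    obtain ⟨x1, x2, r, hr, hrL, hadj1, hadj2⟩ := hpair t1 ht1 t2 ht2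
    set D : List V := L.drop (i+1) with hD
    have hDnd : D.Nodup := (List.drop_sublist _ _).nodup hnd
    have hDch : D.Chain' G.Adj := (hchsplit (i+1)).2
    have hDlen : D.length = m - (i+1) := List.length_drop
    set M : List V := D.take (j-i) with hM
    set B' : List V := D.drop (j-i) with hB'
    have hB'eq : B' = L.drop (j+1) := by
      rw [hB', hD, List.drop_drop]
      congr 1
      omega
    have hMlen : M.length = j - i := by
      rw [hM, List.length_take]
      omega
    have hMlast : M.getLast? = some t2 := by
      rw [hM, List.getLast?_take, if_neg (show ¬ (j - i = 0) by omega)]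
      rw [hD, List.getElem?_drop]
      have he : i + 1 + (j - i - 1) = j := by omega
      rw [he, List.getElem?_eq_getElem hj1]
      rw [show L[j] = t2 from List.getElem_idxOf hj1]
      rfl
    have hMhead : M.head? = some (succ t1) := by
      rw [hM, List.head?_eq_getElem?, List.getElem?_take, if_pos (show 0 < j - i by omega)]
      rw [hD, List.getElem?_drop]
      rw [show i + 1 + 0 = i + 1 by omega, List.getElem?_eq_getElem hi3, ← hb1]
    have hB'head : B'.head? = some (succ t2) := by
      rw [hB'eq, hheadDrop _ hj3, ← hb2]
    set B : List V := M.reverse ++ B' with hBdef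
    have hBL : ∀ z ∈ B, z ∈ D := by
      intro z hz
      rcases List.mem_append.mp hz with h | h
      · exact List.take_subset _ _ (List.mem_reverse.mp h)
      · exact List.drop_subset _ _ h
    have hBnd : B.Nodup := by
      refine List.Nodup.append (by simpa using (List.take_sublist _ _).nodup hDnd)
        ((List.drop_sublist _ _).nodup hDnd) ?_
      rw [List.disjoint_reverse_left]
      exact List.disjoint_take_drop hDnd le_rfl
    have hBch : B.Chain' G.Adj := by
      unfold List.Chain'
      rw [hBdef, List.isChain_append]
      refine ⟨?_, (hchsplit2 D hDch _).2, ?_⟩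
      · rw [List.isChain_reverse, hflip]
        exact (hchsplit2 D hDch _).1
      · intro a ha b hb'
        rw [List.getLast?_reverse, hMhead] at ha
        cases ha
        rw [hB'head] at hb'
        cases hb'
        exact hadj
    have hsp := splice (L.take (i+1)) B r
      ((List.take_sublist _ _).nodup hnd) hBnd
      (hchsplit (i+1)).1 hBch hr
      (fun z hz hz' => hrL z hz (List.take_subset _ _ hz'))
      (fun z hz hz' => hrL z hz (List.drop_subset _ _ (hBL z hz')))
      (fun z hzA hzB => (List.disjoint_take_drop hnd le_rfl) hzA (hBL z hzB))
      (by
        intro a ha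
        rw [hlastTake _ hi1] at ha
        cases ha
        rw [show L[i] = t1 from List.getElem_idxOf hi1]
        exact hadj1.symm)
      (by
        intro b hb'
        rw [hBdef, List.head?_append, List.head?_reverse, hMlast] at hb'
        rw [show (some t2).or B'.head? = some t2 from rfl] at hb'
        cases hb'
        exact hadj2)
    have hlen := hno _ hsp.1
    rw [hsp.2] at hlen
    have h4 := r.length_support
    have hBlen : B.length = (j - i) + (m - (j+1)) := by
      rw [hBdef, List.length_append, List.length_reverse, hMlen, hB'eq, List.length_drop]
    rw [List.length_take, hBlen] at hlen
    omega
  have hcross : ∀ t1 ∈ N, ∀ t2 ∈ N, t1 ≠ t2 → ¬ G.Adj (succ t1) (succ t2) := by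
    intro t1 ht1 t2 ht2 hne12 hadj
    have hidx12 : L.idxOf t1 ≠ L.idxOf t2 := by
      intro h
      apply hne12
      have g1 := List.getElem_idxOf (hidx t1 ht1).1
      have g2 := List.getElem_idxOf (hidx t2 ht2).1
      rw [← g1, ← g2]
      simp only [h]
    rcases lt_or_gt_of_ne hidx12 with h | h
    · exact hcross' t1 ht1 t2 ht2 h hadj
    · exact hcross' t2 ht2 t1 ht1 h hadj.symm
  -- the contact set is a separator
  have hwN : w ∉ N := fun h => hw ((hNmem w).mp h).1
  have hNconn : ¬ (G.induce ((↑N : Set V)ᶜ)).Connected := by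
    intro hconn
    have hwmem : w ∈ ((↑N : Set V)ᶜ) := by simpa using hwN
    have humem : (L.head hne) ∈ ((↑N : Set V)ᶜ) := by simpa using huN
    have key : ∀ (a b : ((↑N : Set V)ᶜ : Set V)) (q : (G.induce ((↑N : Set V)ᶜ)).Walk a b),
        a.1 ∈ H → b.1 ∈ L → False := by
      intro a b q
      induction q with
      | nil =>
        intro ha hb
        exact hHL _ ha hb
      | @cons a' c' b' hadj q ih =>
        intro ha hb
        have hac : G.Adj a'.1 c'.1 := hadj
        by_cases hc : c'.1 ∈ L
        · exact c'.2 (Finset.mem_coe.mpr ((hNmem c'.1).mpr ⟨hc, a'.1, ha, hac⟩))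
        · exact ih (hHadj a'.1 ha c'.1 hac hc) hb
    obtain ⟨q⟩ := hconn.preconnected ⟨w, hwmem⟩ ⟨L.head hne, humem⟩
    exact key _ _ q hwH (List.head_mem hne)
  have hκN : vertexConn G ≤ N.card := by
    by_contra hlt
    push_neg at hlt
    exact hNconn (hcardκ N hlt)
  -- the independent set
  have hsuccL : ∀ t ∈ N, succ t ∈ L := by
    intro t ht
    rw [hsucc t ht (hidx t ht).2.2]
    exact List.getElem_mem _
  have hsuccInj : Set.InjOn succ ↑N := by
    intro t1 ht1 t2 ht2 he
    rw [Finset.mem_coe] at ht1 ht2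
    have g1 := List.getElem_idxOf (hidx t1 ht1).1
    have g2 := List.getElem_idxOf (hidx t2 ht2).1
    have e : L[L.idxOf t1 + 1]'((hidx t1 ht1).2.2) = L[L.idxOf t2 + 1]'((hidx t2 ht2).2.2) := by
      rw [← hsucc t1 ht1 (hidx t1 ht1).2.2, ← hsucc t2 ht2 (hidx t2 ht2).2.2]
      exact he
    have e2 : L.idxOf t1 + 1 = L.idxOf t2 + 1 := (hnd.getElem_inj_iff).mp e
    have e3 : L.idxOf t1 = L.idxOf t2 := by omega
    rw [← g1, ← g2]
    simp only [e3]
  set I : Finset V := insert w (insert (L.head hne) (N.image succ)) with hI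
  have husuccmem : L.head hne ∉ N.image succ := by
    intro h
    obtain ⟨t, ht, hteq⟩ := Finset.mem_image.mp h
    have h0 : L[L.idxOf t + 1]'((hidx t ht).2.2) = L[0]'(by omega) := by
      rw [← hsucc t ht (hidx t ht).2.2, hteq, List.head_eq_getElem]
    have := (hnd.getElem_inj_iff).mp h0
    omega
  have hwmem' : w ∉ insert (L.head hne) (N.image succ) := by
    simp only [Finset.mem_insert, Finset.mem_image]
    push_neg
    constructor
    · intro h
      exact hw (h ▸ List.head_mem hne)
    · intro t ht h
      exact hw (h ▸ hsuccL t ht)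
  have hIcard : I.card = N.card + 2 := by
    rw [hI, Finset.card_insert_of_notMem hwmem', Finset.card_insert_of_notMem husuccmem,
      Finset.card_image_of_injOn hsuccInj]
  have hwu : ¬ G.Adj w (L.head hne) := by
    intro h
    exact huN ((hNmem _).mpr ⟨List.head_mem hne, w, hwH, h⟩)
  have hwsucc : ∀ t ∈ N, ¬ G.Adj w (succ t) := by
    intro t ht h
    exact hsuccN t ht ((hNmem _).mpr ⟨hsuccL t ht, w, hwH, h⟩)
  have hIpair : (↑I : Set V).Pairwise (fun a b => ¬ G.Adj a b) := by
    intro a ha b hb hab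
    simp only [hI, Finset.coe_insert, Set.mem_insert_iff, Finset.coe_image,
      Set.mem_image, Finset.mem_coe] at ha hb
    rcases ha with rfl | rfl | ⟨t1, ht1, rfl⟩ <;> rcases hb with rfl | rfl | ⟨t2, ht2, rfl⟩
    · exact absurd rfl hab
    · exact hwu
    · exact hwsucc t2 ht2
    · exact fun h => hwu h.symm
    · exact absurd rfl hab
    · exact husucc t2 ht2
    · exact fun h => hwsucc t1 ht1 h.symm
    · exact fun h => husucc t1 ht1 h.symm
    · refine hcross t1 ht1 t2 ht2 (fun he => hab ?_) 
      rw [he]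
  have hαlow : N.card + 2 ≤ indepNumOn G Set.univ := by
    apply le_csSup
    · refine ⟨Fintype.card V, ?_⟩
      rintro n ⟨I0, _, _, hn⟩
      rw [← hn]
      calc I0.ncard ≤ (Set.univ : Set V).ncard :=
            Set.ncard_le_ncard (Set.subset_univ _) Set.finite_univ
        _ = Fintype.card V := by rw [Set.ncard_univ, Nat.card_eq_fintype_card]
    · exact ⟨↑I, Set.subset_univ _, hIpair, by rw [Set.ncard_coe_finset, hIcard]⟩
  omega

end CEaux

/-- Chvátal–Erdős: if `G` is connected and `α(G) ≤ κ(G) + 1`, then `G` has a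
Hamiltonian path. -/
theorem stmt_9 [Fintype V] [DecidableEq V] (G : SimpleGraph V) (hG : G.Connected)
    (hακ : indepNumOn G Set.univ ≤ vertexConn G + 1) :
    ∃ (u v : V) (p : G.Walk u v), p.IsHamiltonian := by
  classical
  have hnV : Nonempty V := hG.nonempty
  have hκ : ∀ X : Finset V, X.card < vertexConn G → (G.induce ((↑X : Set V)ᶜ)).Connected := by
    have hmem : vertexConn G ∈ {k | k < Fintype.card V ∧ ∀ X : Finset V, X.card < k →
        (G.induce ((↑X : Set V)ᶜ)).Connected} := by
      apply Nat.sSup_mem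
      · exact ⟨0, Fintype.card_pos, fun X hX => absurd hX (Nat.not_lt_zero _)⟩
      · exact ⟨Fintype.card V, fun k hk => le_of_lt hk.1⟩
    exact hmem.2
  set S : Set ℕ := {k | ∃ l : List V, IsPathList G l ∧ l.length = k} with hS
  have hSne : S.Nonempty := ⟨1, [Classical.arbitrary V], ⟨by simp, by simp, List.isChain_singleton _⟩, rfl⟩
  have hSbdd : BddAbove S := by
    refine ⟨Fintype.card V, ?_⟩
    rintro k ⟨l, ⟨_, hnd, _⟩, rfl⟩
    exact hnd.length_le_card
  obtain ⟨L, hL, hlen⟩ := Nat.sSup_mem hSne hSbdd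
  have hall : ∀ x : V, x ∈ L := by
    intro x
    by_contra hx
    obtain ⟨L', hL', hlonger⟩ := ce_extend hακ hκ L hL x hx
    have h2 := le_csSup hSbdd (show L'.length ∈ S from ⟨L', hL', rfl⟩)
    omega
  obtain ⟨u, v, p, hsup⟩ := exists_walk_of_list L hL.1 hL.2.2
  refine ⟨u, v, p, ?_⟩
  intro a
  rw [hsup]
  exact List.count_eq_one_of_mem hL.2.1 (hall a)
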